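/- For any n ≥ 2 and any n-bit x, the two queries (α, β) and (α', β') given by α = (pattern 00 repeated) = 0, β = (binary pattern ...1010) mod 2^n, α' = (binary pattern ...1010) mod 2^n, β' = (binary pattern ...0101) mod 2^n, determine the (n−1) least significant bits of x from the corresponding responses ỹ = y XOR α XOR β and ỹ' = y' XOR α' XOR β', where y = ((α+x) mod 2^n) XOR ((β+x) mod 2^n) and similarly y'. Thus two chosen queries suffice to recover x modulo 2^(n−1). -/
import Mathlib

private lemma sum_rec (m a : ℕ) :
    (∑ j ∈ Finset.range (m+1), a * 4^j) = 4 * (∑ j ∈ Finset.range m, a * 4^j) + a := by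
  rw [Finset.sum_range_succ', Finset.mul_sum]
  simp [pow_succ]
  exact Finset.sum_congr rfl (fun j _ => by ring)

private lemma testBit_sum : ∀ (m a i : ℕ), a = 1 ∨ a = 2 → i < 2*m →
    (∑ j ∈ Finset.range m, a * 4^j).testBit i = decide (i % 2 = a - 1) := by
  intro m
  induction m with
  | zero => intro a i _ hi; omega
  | succ m ih =>
    intro a i ha hi
    rw [sum_rec]
    set s := ∑ j ∈ Finset.range m, a * 4^j with hs
    rcases i with _ | _ | i
    · have h0 : (4*s+a) % 2 = a % 2 := by omega
      rw [Nat.testBit_zero, h0]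
      rcases ha with rfl | rfl <;> decide
    · have h0 : ((4*s+a)/2) % 2 = (a/2) % 2 := by omega
      rw [Nat.testBit_add_one, Nat.testBit_zero, h0]
      rcases ha with rfl | rfl <;> decide
    · have hd : (4*s+a)/2/2 = s := by rcases ha with rfl | rfl <;> omega
      rw [Nat.testBit_add_one, Nat.testBit_add_one, hd, ih a i ha (by omega)]
      have h2 : (i+1+1) % 2 = i % 2 := by omega
      rw [h2]

private lemma carry_inv {n : ℕ} (X B C : BitVec n)
    (hb : ∀ i, i < n → B.getLsbD i = decide (i % 2 = 1))
    (hc : ∀ i, i < n → C.getLsbD i = decide (i % 2 = 0)) :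
    ∀ i, i ≤ n →
      (i % 2 = 0 → BitVec.carry i C X false = true → BitVec.carry i B X false = true) ∧
      (i % 2 = 1 → BitVec.carry i B X false = true → BitVec.carry i C X false = true) := by
  intro i
  induction i with
  | zero => intro _; simp [BitVec.carry_zero]
  | succ i _ =>
    intro hi
    rw [BitVec.carry_succ, BitVec.carry_succ, hb i (by omega), hc i (by omega)]
    rcases Nat.mod_two_eq_zero_or_one i with hp | hp
    · have h1 : (i+1) % 2 = 1 := by omega
      rw [hp, h1]
      constructor
      · simp
      · intro _ h
        revert h
        cases X.getLsbD i <;> cases BitVec.carry i B X false <;>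
          cases BitVec.carry i C X false <;> simp [Bool.atLeastTwo]
    · have h1 : (i+1) % 2 = 0 := by omega
      rw [hp, h1]
      constructor
      · intro _ h
        revert h
        cases X.getLsbD i <;> cases BitVec.carry i B X false <;>
          cases BitVec.carry i C X false <;> simp [Bool.atLeastTwo]
      · simp

theorem stmt_19 (n : ℕ) (hn : 2 ≤ n) :
    let α : ℕ := 0
    let β : ℕ := (∑ j ∈ Finset.range n, 2 * 4^j) % 2^n
    let α' : ℕ := (∑ j ∈ Finset.range n, 2 * 4^j) % 2^n
    let β' : ℕ := (∑ j ∈ Finset.range n, 1 * 4^j) % 2^n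
    ∀ x x' : ℕ, x < 2^n → x' < 2^n →
      ((((α + x) % 2^n) ^^^ ((β + x) % 2^n)) ^^^ α ^^^ β =
        (((α + x') % 2^n) ^^^ ((β + x') % 2^n)) ^^^ α ^^^ β) →
      ((((α' + x) % 2^n) ^^^ ((β' + x) % 2^n)) ^^^ α' ^^^ β' =
        (((α' + x') % 2^n) ^^^ ((β' + x') % 2^n)) ^^^ α' ^^^ β') →
      x % 2^(n-1) = x' % 2^(n-1) := by
  intro α β α' β' x x' hx hx' h1 h2
  simp only [α, β, α', β'] at h1 h2
  set S : ℕ := ∑ j ∈ Finset.range n, 2 * 4^j with hS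
  set T : ℕ := ∑ j ∈ Finset.range n, 1 * 4^j with hT
  set X : BitVec n := BitVec.ofNat n x with hX
  set X' : BitVec n := BitVec.ofNat n x' with hX'
  set Bv : BitVec n := BitVec.ofNat n S with hBV
  set Cv : BitVec n := BitVec.ofNat n T with hCV
  -- bit patterns of Bv, Cv
  have hb : ∀ i, i < n → Bv.getLsbD i = decide (i % 2 = 1) := by
    intro i hi
    have h := testBit_sum n 2 i (Or.inr rfl) (by omega)
    have h2 : Bv.getLsbD i = S.testBit i := by
      simp [hBV, BitVec.getLsbD, BitVec.toNat_ofNat, Nat.testBit_mod_two_pow, hi]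
    rw [h2, hS]
    exact h
  have hcv : ∀ i, i < n → Cv.getLsbD i = decide (i % 2 = 0) := by
    intro i hi
    have h := testBit_sum n 1 i (Or.inl rfl) (by omega)
    have h2 : Cv.getLsbD i = T.testBit i := by
      simp [hCV, BitVec.getLsbD, BitVec.toNat_ofNat, Nat.testBit_mod_two_pow, hi]
    rw [h2, hT]
    exact h
  -- conversion of responses to bits
  have key : ∀ (z : ℕ), z < 2^n → ∀ (A : ℕ) (i : ℕ), i < n →
      ((A % 2^n + z) % 2^n).testBit i = (BitVec.ofNat n A + BitVec.ofNat n z).getLsbD i := by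
    intro z hz A i hi
    simp [BitVec.getLsbD, BitVec.toNat_add, BitVec.toNat_ofNat, Nat.mod_eq_of_lt hz,
      Nat.mod_mod_of_dvd]
  have hxX : ∀ i, x.testBit i = X.getLsbD i := by
    intro i; simp [hX, BitVec.getLsbD, BitVec.toNat_ofNat, Nat.mod_eq_of_lt hx]
  have hxX' : ∀ i, x'.testBit i = X'.getLsbD i := by
    intro i; simp [hX', BitVec.getLsbD, BitVec.toNat_ofNat, Nat.mod_eq_of_lt hx']
  have hSB : ∀ i, (S % 2^n).testBit i = Bv.getLsbD i := by
    intro i; simp [hBV, BitVec.getLsbD, BitVec.toNat_ofNat]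
  have hTC : ∀ i, (T % 2^n).testBit i = Cv.getLsbD i := by
    intro i; simp [hCV, BitVec.getLsbD, BitVec.toNat_ofNat]
  have hkey : ∀ i, i < n →
      BitVec.carry i Bv X false = BitVec.carry i Bv X' false ∧
      BitVec.carry i Cv X false = BitVec.carry i Cv X' false := by
    intro i hi
    have t1 := congrArg (fun t => Nat.testBit t i) h1
    have t2 := congrArg (fun t => Nat.testBit t i) h2
    simp only [Nat.testBit_xor] at t1 t2
    rw [Nat.zero_add, Nat.zero_add, Nat.mod_eq_of_lt hx, Nat.mod_eq_of_lt hx',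
      Nat.zero_testBit, key x hx S i hi, key x' hx' S i hi, hxX, hxX', hSB,
      BitVec.getLsbD_add hi, BitVec.getLsbD_add hi] at t1
    rw [key x hx S i hi, key x' hx' S i hi, key x hx T i hi, key x' hx' T i hi, hSB, hTC,
      BitVec.getLsbD_add hi, BitVec.getLsbD_add hi, BitVec.getLsbD_add hi,
      BitVec.getLsbD_add hi] at t2
    simp only [← hBV, ← hCV, ← hX, ← hX'] at t1 t2
    revert t1 t2
    generalize X.getLsbD i = a
    generalize X'.getLsbD i = a'
    generalize Bv.getLsbD i = b
    generalize Cv.getLsbD i = cc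
    generalize BitVec.carry i Bv X false = c
    generalize BitVec.carry i Bv X' false = c'
    generalize BitVec.carry i Cv X false = e
    generalize BitVec.carry i Cv X' false = e'
    cases a <;> cases a' <;> cases b <;> cases cc <;> cases c <;> cases c' <;>
      cases e <;> cases e' <;> decide
  -- bit recovery
  have hbit : ∀ i, i + 1 < n → X.getLsbD i = X'.getLsbD i := by
    intro i hi
    obtain ⟨hc1, he1⟩ := hkey i (by omega)
    obtain ⟨hc2, he2⟩ := hkey (i+1) hi
    have inv := carry_inv X Bv Cv hb hcv i (by omega)
    have inv' := carry_inv X' Bv Cv hb hcv i (by omega)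
    rw [BitVec.carry_succ, BitVec.carry_succ, hb i (by omega)] at hc2
    rw [BitVec.carry_succ, BitVec.carry_succ, hcv i (by omega)] at he2
    rw [← hc1] at hc2
    rw [← he1] at he2
    rcases Nat.mod_two_eq_zero_or_one i with hp | hp
    · have ho := inv.1 hp
      have ho' := inv'.1 hp
      rw [← hc1] at ho'
      rw [← he1] at ho'
      rw [hp] at hc2 he2
      revert hc2 he2 ho ho'
      generalize X.getLsbD i = a
      generalize X'.getLsbD i = a'
      generalize BitVec.carry i Bv X false = c
      generalize BitVec.carry i Cv X false = e
      cases a <;> cases a' <;> cases c <;> cases e <;> decide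
    · have ho := inv.2 hp
      have ho' := inv'.2 hp
      rw [← hc1] at ho'
      rw [← he1] at ho'
      rw [hp] at hc2 he2
      revert hc2 he2 ho ho'
      generalize X.getLsbD i = a
      generalize X'.getLsbD i = a'
      generalize BitVec.carry i Bv X false = c
      generalize BitVec.carry i Cv X false = e
      cases a <;> cases a' <;> cases c <;> cases e <;> decide
  -- conclude
  apply Nat.eq_of_testBit_eq
  intro j
  rw [Nat.testBit_mod_two_pow, Nat.testBit_mod_two_pow]
  by_cases hj : j < n - 1
  · have hd : (decide (j < n-1)) = true := decide_eq_true hj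
    rw [hd, Bool.true_and, Bool.true_and, hxX, hxX', hbit j (by omega)]
  · simp [hj]
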